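/- Let G be a finite simple cubic (3-regular) bipartite graph with bipartition (X, Y) that is essentially 4-edge-connected, i.e., G is 3-connected and every edge cut of G consisting of exactly three edges is the set of the three edges incident with a single vertex. Let x ∈ X and y ∈ Y. Then the induced subgraph of G on V(G) \ (N[x] ∪ N[y]) has a perfect matching, where N[v] = {v} ∪ N(v) denotes the closed neighborhood of v. -/

import Mathlib

open SimpleGraph

/-- `G` is `k`-connected: it has more than `k` vertices and remains connected
after deleting any set of fewer than `k` vertices. -/
def IsKConnected {V : Type*} [Fintype V] (G : SimpleGraph V) (k : ℕ) : Prop :=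
  k + 1 ≤ Fintype.card V ∧ ∀ s : Set V, s.ncard < k → (G.induce sᶜ).Connected

/-- A 3-connected cubic graph is essentially 4-edge-connected: every edge cut
consisting of exactly three edges is the set of edges incident with a single vertex. -/
def EssentiallyFourEdgeConnected {V : Type*} [Fintype V] (G : SimpleGraph V) : Prop :=
  IsKConnected G 3 ∧
    ∀ S : Set (Sym2 V), S ⊆ G.edgeSet → S.ncard = 3 →
      ¬ (G.deleteEdges S).Connected → ∃ v : V, S = G.incidenceSet v

/-- `(X, Y)` is a bipartition of `G`. -/
def IsBipartition {V : Type*} (G : SimpleGraph V) (X Y : Set V) : Prop :=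
  X ∪ Y = Set.univ ∧ Disjoint X Y ∧
    ∀ ⦃u v : V⦄, G.Adj u v → (u ∈ X ∧ v ∈ Y) ∨ (u ∈ Y ∧ v ∈ X)

open Finset in

lemma walk_closed {V : Type*} {G : SimpleGraph V} {W : Set V}
    (hW : ∀ a ∈ W, ∀ b, G.Adj a b → b ∈ W) {a b : V} (p : G.Walk a b) (ha : a ∈ W) :
    b ∈ W := by
  induction p with
  | nil => exact ha
  | cons h p ih => exact ih (hW _ ha _ h)

lemma not_connected_of_closed {V : Type*} {G : SimpleGraph V} {W : Set V}
    (hW : ∀ a ∈ W, ∀ b, G.Adj a b → b ∈ W) {a b : V} (ha : a ∈ W) (hb : b ∉ W) :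
    ¬ G.Connected := by
  intro h
  obtain ⟨p⟩ := h.preconnected a b
  exact hb (walk_closed hW p ha)

lemma connected_of_three {V : Type*} [Fintype V] {G : SimpleGraph V}
    (h : IsKConnected G 3) : G.Connected := by
  have h2 := h.2 ∅ (by simp)
  rw [Set.compl_empty] at h2
  exact (induceUnivIso G).connected_iff.mp h2

lemma sum_card_inter_comm {V : Type*} [Fintype V] [DecidableEq V] (G : SimpleGraph V)
    [DecidableRel G.Adj] (A B : Finset V) :
    ∑ a ∈ A, (B ∩ G.neighborFinset a).card = ∑ b ∈ B, (A ∩ G.neighborFinset b).card := by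
  have key : ∀ (C D : Finset V) (c : V), (D ∩ G.neighborFinset c).card
      = ∑ d ∈ D, if G.Adj c d then 1 else 0 := by
    intro C D c
    rw [← Finset.card_filter]
    congr 1
    ext d
    simp [Finset.mem_inter, mem_neighborFinset, and_comm]
  simp only [key A B, key B A]
  rw [Finset.sum_comm]
  apply Finset.sum_congr rfl
  intro a _
  apply Finset.sum_congr rfl
  intro b _
  simp [G.adj_comm]

open Finset in
lemma key_hall {V : Type*} [Fintype V] [DecidableEq V] (G : SimpleGraph V)
    [DecidableRel G.Adj]
    (hcubic : ∀ v : V, G.degree v = 3)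
    (X Y : Set V) (hbip : IsBipartition G X Y)
    (hess : EssentiallyFourEdgeConnected G)
    (x y : V) (hx : x ∈ X) (hy : y ∈ Y)
    (S : Finset V) (hSX : ∀ a ∈ S, a ∈ X)
    (hSD : ∀ a ∈ S, a ∉ insert x (G.neighborFinset x) ∪ insert y (G.neighborFinset y)) :
    S.card ≤ (S.biUnion (fun a => G.neighborFinset a
      \ (insert x (G.neighborFinset x) ∪ insert y (G.neighborFinset y)))).card := by
  by_contra hlt
  push_neg at hlt
  set Df : Finset V := insert x (G.neighborFinset x) ∪ insert y (G.neighborFinset y) with hDf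
  set T : Finset V := S.biUnion (fun a => G.neighborFinset a \ Df) with hT
  set W : Finset V := S ∪ T ∪ insert x (G.neighborFinset x) with hW
  obtain ⟨hXY, hdisj, hadj⟩ := hbip
  have hdXY : ∀ {u : V}, u ∈ X → u ∈ Y → False := fun hu hv => Set.disjoint_left.mp hdisj hu hv
  have hmemY : ∀ {u v : V}, u ∈ X → G.Adj u v → v ∈ Y := by
    intro u v hu h
    rcases hadj h with ⟨_, h2⟩ | ⟨h1, _⟩
    · exact h2
    · exact absurd h1 (fun hh => hdXY hu hh)
  have hmemX : ∀ {u v : V}, u ∈ Y → G.Adj u v → v ∈ X := by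
    intro u v hu h
    rcases hadj h with ⟨h1, _⟩ | ⟨_, h2⟩
    · exact absurd h1 (fun hh => hdXY hh hu)
    · exact h2
  have hdeg : ∀ v : V, (G.neighborFinset v).card = 3 := by
    intro v; rw [G.card_neighborFinset_eq_degree]; exact hcubic v
  have hxDf : x ∈ Df := by simp [hDf]
  have hyDf : y ∈ Df := by simp [hDf]
  have hNxDf : G.neighborFinset x ⊆ Df := by intro a ha; simp [hDf, ha]
  have hNyDf : G.neighborFinset y ⊆ Df := by intro a ha; simp [hDf, ha]
  have hSprop : ∀ a ∈ S, a ∈ X ∧ a ∉ Df := fun a ha => ⟨hSX a ha, hSD a ha⟩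
  have hTprop : ∀ t ∈ T, (t ∈ Y ∧ t ∉ Df) ∧ ∃ a ∈ S, G.Adj a t := by
    intro t ht
    rw [hT, Finset.mem_biUnion] at ht
    obtain ⟨a, haS, hmem⟩ := ht
    rw [Finset.mem_sdiff, SimpleGraph.mem_neighborFinset] at hmem
    exact ⟨⟨hmemY (hSX a haS) hmem.1, hmem.2⟩, a, haS, hmem.1⟩
  have hNxY : ∀ w ∈ G.neighborFinset x, w ∈ Y := by
    intro w hw; exact hmemY hx ((SimpleGraph.mem_neighborFinset G x w).mp hw)
  -- membership in W
  have hSW : S ⊆ W := by intro a ha; simp [hW, ha]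
  have hTW' : T ⊆ W := by intro a ha; simp [hW, ha]
  have hxW : x ∈ W := by simp [hW]
  have hNxW' : G.neighborFinset x ⊆ W := by intro a ha; simp [hW, ha]
  -- (1) neighbors of S
  have hNS : ∀ a ∈ S, G.neighborFinset a ⊆ T ∪ G.neighborFinset x := by
    intro a ha b hb
    have hab : G.Adj a b := (SimpleGraph.mem_neighborFinset G a b).mp hb
    have hbY : b ∈ Y := hmemY (hSX a ha) hab
    by_cases hbDf : b ∈ Df
    · rw [hDf] at hbDf
      simp only [Finset.mem_union, Finset.mem_insert] at hbDf
      rcases hbDf with (rfl | hbNx) | (rfl | hbNy)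
      · exact absurd hx (fun hh => hdXY hh hbY)
      · simp [hbNx]
      · exfalso
        apply (hSprop a ha).2
        apply hNyDf
        rw [SimpleGraph.mem_neighborFinset]
        exact hab.symm
      · exact absurd (hmemX hy ((SimpleGraph.mem_neighborFinset G y b).mp hbNy)) (fun hh => hdXY hh hbY)
    · apply Finset.mem_union_left
      rw [hT, Finset.mem_biUnion]
      exact ⟨a, ha, Finset.mem_sdiff.mpr ⟨hb, hbDf⟩⟩
  have hNSW : ∀ a ∈ S, G.neighborFinset a ⊆ W := by
    intro a ha b hb
    rcases Finset.mem_union.mp (hNS a ha hb) with h | h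
    · exact hTW' h
    · exact hNxW' h
  -- (2) neighbors of T inside W
  have hTinter : ∀ t ∈ T, G.neighborFinset t ∩ W = G.neighborFinset t ∩ S := by
    intro t ht
    have htY := (hTprop t ht).1.1
    have htDf := (hTprop t ht).1.2
    ext b
    simp only [Finset.mem_inter]
    constructor
    · rintro ⟨hbN, hbW⟩
      refine ⟨hbN, ?_⟩
      have hbX : b ∈ X := hmemX htY ((SimpleGraph.mem_neighborFinset G t b).mp hbN)
      rw [hW] at hbW
      simp only [Finset.mem_union, Finset.mem_insert] at hbW
      rcases hbW with (h | h) | (rfl | h)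
      · exact h
      · exact absurd (hTprop b h).1.1 (fun hh => hdXY hbX hh)
      · exfalso
        apply htDf; apply hNxDf
        rw [SimpleGraph.mem_neighborFinset]
        exact ((SimpleGraph.mem_neighborFinset G t b).mp hbN).symm
      · exact absurd (hNxY b h) (fun hh => hdXY hbX hh)
    · rintro ⟨hbN, hbS⟩
      exact ⟨hbN, hSW hbS⟩
  -- (3) neighbors of N(x) inside W
  have hNxinter : ∀ w ∈ G.neighborFinset x,
      G.neighborFinset w ∩ W = insert x (G.neighborFinset w ∩ S) := by
    intro w hw
    have hwY := hNxY w hw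
    have hwx : G.Adj w x := ((SimpleGraph.mem_neighborFinset G x w).mp hw).symm
    ext b
    simp only [Finset.mem_inter, Finset.mem_insert]
    constructor
    · rintro ⟨hbN, hbW⟩
      have hbX : b ∈ X := hmemX hwY ((SimpleGraph.mem_neighborFinset G w b).mp hbN)
      rw [hW] at hbW
      simp only [Finset.mem_union, Finset.mem_insert] at hbW
      rcases hbW with (h | h) | (rfl | h)
      · exact Or.inr ⟨hbN, h⟩
      · exact absurd (hTprop b h).1.1 (fun hh => hdXY hbX hh)
      · exact Or.inl rfl
      · exact absurd (hNxY b h) (fun hh => hdXY hbX hh)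
    · rintro (rfl | ⟨hbN, hbS⟩)
      · exact ⟨(SimpleGraph.mem_neighborFinset G w b).mpr hwx, hxW⟩
      · exact ⟨hbN, hSW hbS⟩
  -- counting
  have hxNx : x ∉ G.neighborFinset x := by
    rw [SimpleGraph.mem_neighborFinset]; exact fun h => G.irrefl h
  have hxS : x ∉ S := fun h => (hSprop x h).2 hxDf
  have cT : ∀ t ∈ T, (G.neighborFinset t \ W).card + (S ∩ G.neighborFinset t).card = 3 := by
    intro t ht
    rw [Finset.inter_comm, ← hTinter t ht, Finset.card_sdiff_add_card_inter]
    exact hdeg t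
  have cNx : ∀ w ∈ G.neighborFinset x,
      (G.neighborFinset w \ W).card + ((S ∩ G.neighborFinset w).card + 1) = 3 := by
    intro w hw
    have h1 : (G.neighborFinset w \ W).card + (G.neighborFinset w ∩ W).card = 3 := by
      rw [Finset.card_sdiff_add_card_inter]; exact hdeg w
    rw [hNxinter w hw] at h1
    rw [Finset.card_insert_of_notMem (by
      simp only [Finset.mem_inter]
      exact fun h => hxS h.2)] at h1
    rw [Finset.inter_comm] at h1
    omega
  have cS : ∀ a ∈ S, (G.neighborFinset a \ W).card = 0 := by
    intro a ha
    rw [Finset.card_eq_zero, Finset.sdiff_eq_empty_iff_subset]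
    exact hNSW a ha
  have cx : (G.neighborFinset x \ W).card = 0 := by
    rw [Finset.card_eq_zero, Finset.sdiff_eq_empty_iff_subset]
    exact hNxW'
  have cS3 : ∀ a ∈ S, (T ∩ G.neighborFinset a).card
      + (G.neighborFinset x ∩ G.neighborFinset a).card = 3 := by
    intro a ha
    have hdTNx : Disjoint (T ∩ G.neighborFinset a) (G.neighborFinset x ∩ G.neighborFinset a) := by
      rw [Finset.disjoint_left]
      intro b hb hb'
      exact (hTprop b (Finset.mem_inter.mp hb).1).1.2 (hNxDf (Finset.mem_inter.mp hb').1)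
    rw [← Finset.card_union_of_disjoint hdTNx, ← Finset.union_inter_distrib_right]
    rw [Finset.inter_eq_right.mpr (hNS a ha)]
    exact hdeg a
  -- disjointness of the pieces of W
  have dS_T : Disjoint S T := by
    rw [Finset.disjoint_left]
    intro a haS haT
    exact hdXY (hSX a haS) (hTprop a haT).1.1
  have dST_I : Disjoint (S ∪ T) (insert x (G.neighborFinset x)) := by
    rw [Finset.disjoint_left]
    intro a ha ha'
    have haDf : a ∈ Df := by
      rcases Finset.mem_insert.mp ha' with rfl | h
      · exact hxDf
      · exact hNxDf h
    rcases Finset.mem_union.mp ha with h | h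
    · exact (hSprop a h).2 haDf
    · exact (hTprop a h).1.2 haDf
  have hsum : ∀ f : V → ℕ, ∑ w ∈ W, f w
      = (∑ w ∈ S, f w + ∑ w ∈ T, f w) + (f x + ∑ w ∈ G.neighborFinset x, f w) := by
    intro f
    rw [hW, Finset.sum_union dST_I, Finset.sum_union dS_T, Finset.sum_insert hxNx]
  set cc : ℕ := ∑ w ∈ W, (G.neighborFinset w \ W).card with hcc
  have e1 : ∑ t ∈ T, (G.neighborFinset t \ W).card + ∑ t ∈ T, (S ∩ G.neighborFinset t).card
      = 3 * T.card := by
    rw [← Finset.sum_add_distrib]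
    rw [Finset.sum_congr rfl cT, Finset.sum_const, smul_eq_mul, mul_comm]
  have e2 : ∑ w ∈ G.neighborFinset x, (G.neighborFinset w \ W).card
      + (∑ w ∈ G.neighborFinset x, (S ∩ G.neighborFinset w).card + 3) = 9 := by
    have := Finset.sum_congr rfl cNx
    rw [Finset.sum_const, Finset.sum_add_distrib, Finset.sum_add_distrib] at this
    rw [hdeg x] at this
    simp only [smul_eq_mul] at this
    have h3 : ∑ w ∈ G.neighborFinset x, 1 = 3 := by rw [Finset.sum_const, hdeg x]; simp
    omega
  have e3 : ∑ t ∈ T, (S ∩ G.neighborFinset t).card = ∑ a ∈ S, (T ∩ G.neighborFinset a).card :=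
    sum_card_inter_comm G T S
  have e4 : ∑ w ∈ G.neighborFinset x, (S ∩ G.neighborFinset w).card
      = ∑ a ∈ S, (G.neighborFinset x ∩ G.neighborFinset a).card :=
    sum_card_inter_comm G (G.neighborFinset x) S
  have e5 : ∑ a ∈ S, (T ∩ G.neighborFinset a).card
      + ∑ a ∈ S, (G.neighborFinset x ∩ G.neighborFinset a).card = 3 * S.card := by
    rw [← Finset.sum_add_distrib, Finset.sum_congr rfl cS3, Finset.sum_const, smul_eq_mul,
      mul_comm]
  have ecc : cc = ∑ t ∈ T, (G.neighborFinset t \ W).card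
      + ∑ w ∈ G.neighborFinset x, (G.neighborFinset w \ W).card := by
    rw [hcc, hsum, Finset.sum_congr rfl cS, cx, Finset.sum_const_zero]
    omega
  have heq : cc + 3 * S.card = 3 * T.card + 6 := by omega
  have hcase : cc = 0 ∨ cc = 3 := by omega
  -- witnesses outside W
  have houtW : ∀ u, G.Adj y u → u ≠ x → u ∉ W := by
    intro u hadj_u hux hu
    have huX : u ∈ X := hmemX hy hadj_u
    have huDf : u ∈ Df := hNyDf ((SimpleGraph.mem_neighborFinset G y u).mpr hadj_u)
    rw [hW] at hu
    simp only [Finset.mem_union, Finset.mem_insert] at hu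
    rcases hu with (h | h) | (h | h)
    · exact (hSprop u h).2 huDf
    · exact hdXY huX (hTprop u h).1.1
    · exact hux h
    · exact hdXY huX (hNxY u h)
  have hNyW : ∀ u ∈ (G.neighborFinset y).erase x, u ∉ W := by
    intro u hu
    exact houtW u ((SimpleGraph.mem_neighborFinset G y u).mp (Finset.mem_of_mem_erase hu))
      (Finset.ne_of_mem_erase hu)
  have hNye : 2 ≤ ((G.neighborFinset y).erase x).card := by
    have h1 := Finset.pred_card_le_card_erase (s := G.neighborFinset y) (a := x)
    rw [hdeg y] at h1
    omega
  obtain ⟨u, hu⟩ : ((G.neighborFinset y).erase x).Nonempty := Finset.card_pos.mp (by omega)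
  have huW : u ∉ W := hNyW u hu
  rcases hcase with h0 | h3
  · -- zero crossing edges
    have hzero : ∀ w ∈ W, (G.neighborFinset w \ W).card = 0 :=
      Finset.sum_eq_zero_iff.mp (hcc ▸ h0)
    have hclosed : ∀ a ∈ (↑W : Set V), ∀ b, G.Adj a b → b ∈ (↑W : Set V) := by
      intro a ha b hab
      by_contra hb
      have hmem : b ∈ G.neighborFinset a \ W :=
        Finset.mem_sdiff.mpr ⟨(SimpleGraph.mem_neighborFinset G a b).mpr hab, fun h => hb h⟩
      have h := hzero a ha
      rw [Finset.card_eq_zero] at h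
      rw [h] at hmem
      exact Finset.notMem_empty b hmem
    exact not_connected_of_closed hclosed hxW huW (connected_of_three hess.1)
  · -- three crossing edges
    set Cf : Finset (V × V) :=
      W.biUnion (fun w => (G.neighborFinset w \ W).image (fun z => (w, z))) with hCfdef
    have hCf_mem : ∀ p : V × V, p ∈ Cf ↔ p.1 ∈ W ∧ G.Adj p.1 p.2 ∧ p.2 ∉ W := by
      intro p
      rw [hCfdef, Finset.mem_biUnion]
      constructor
      · rintro ⟨w, hw, hp⟩
        rw [Finset.mem_image] at hp
        obtain ⟨z, hz, hzp⟩ := hp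
        rw [Finset.mem_sdiff, SimpleGraph.mem_neighborFinset] at hz
        subst hzp
        exact ⟨hw, hz.1, hz.2⟩
      · rintro ⟨h1, h2, h3⟩
        exact ⟨p.1, h1, Finset.mem_image.mpr ⟨p.2,
          Finset.mem_sdiff.mpr ⟨(SimpleGraph.mem_neighborFinset G p.1 p.2).mpr h2, h3⟩, rfl⟩⟩
    have hCfcard : Cf.card = 3 := by
      rw [hCfdef, Finset.card_biUnion]
      · rw [← h3, hcc]
        apply Finset.sum_congr rfl
        intro w _
        exact Finset.card_image_of_injective _ (fun a b h => ((Prod.mk.injEq _ _ _ _).mp h).2)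
      · intro w1 _ w2 _ hne
        simp only [Function.onFun]
        rw [Finset.disjoint_left]
        intro p hp1 hp2
        rw [Finset.mem_image] at hp1 hp2
        obtain ⟨z1, _, h1⟩ := hp1
        obtain ⟨z2, _, h2⟩ := hp2
        apply hne
        rw [← h1] at h2
        exact (((Prod.mk.injEq _ _ _ _).mp h2).1).symm
    set Cs : Set (Sym2 V) := ↑(Cf.image (fun p => s(p.1, p.2))) with hCsdef
    have hCs_mem : ∀ e, e ∈ Cs ↔ ∃ p ∈ Cf, s(p.1, p.2) = e := by
      intro e
      rw [hCsdef, Finset.mem_coe, Finset.mem_image]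
    have hCscard : Cs.ncard = 3 := by
      rw [hCsdef, Set.ncard_coe_finset, Finset.card_image_of_injOn, hCfcard]
      intro p hp q hq hpq
      rw [Finset.mem_coe, hCf_mem] at hp hq
      rcases Sym2.eq_iff.mp hpq with ⟨h1, h2⟩ | ⟨h1, h2⟩
      · exact Prod.ext h1 h2
      · exfalso
        apply hp.2.2
        rw [h2]
        exact hq.1
    have hsub : Cs ⊆ G.edgeSet := by
      intro e he
      rw [hCs_mem] at he
      obtain ⟨p, hp, rfl⟩ := he
      exact ((hCf_mem p).mp hp).2.1
    have hnotconn : ¬ (G.deleteEdges Cs).Connected := by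
      refine not_connected_of_closed (W := ↑W) ?_ hxW huW
      intro a ha b hab
      rw [SimpleGraph.deleteEdges_adj] at hab
      by_contra hb
      exact hab.2 ((hCs_mem _).mpr ⟨(a, b), (hCf_mem _).mpr ⟨ha, hab.1, fun h => hb h⟩, rfl⟩)
    obtain ⟨v, hv⟩ := hess.2 Cs hsub hCscard hnotconn
    have hvW : v ∉ W := by
      intro hvW0
      obtain ⟨b, hbW, hvb⟩ : ∃ b, b ∈ W ∧ G.Adj v b := by
        rw [hW] at hvW0
        simp only [Finset.mem_union, Finset.mem_insert] at hvW0
        rcases hvW0 with (h | h) | (h | h)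
        · obtain ⟨b, hb⟩ : (G.neighborFinset v).Nonempty := by
            rw [← Finset.card_pos, hdeg]; omega
          exact ⟨b, hNSW v h hb, (SimpleGraph.mem_neighborFinset G v b).mp hb⟩
        · obtain ⟨a, haS, haadj⟩ := (hTprop v h).2
          exact ⟨a, hSW haS, haadj.symm⟩
        · subst h
          obtain ⟨b, hb⟩ : (G.neighborFinset v).Nonempty := by
            rw [← Finset.card_pos, hdeg]; omega
          exact ⟨b, hNxW' hb, (SimpleGraph.mem_neighborFinset G v b).mp hb⟩
        · exact ⟨x, hxW, ((SimpleGraph.mem_neighborFinset G x v).mp h).symm⟩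
      have hedge : s(v, b) ∈ Cs := by
        rw [hv, SimpleGraph.mk'_mem_incidenceSet_iff]
        exact ⟨hvb, Or.inl rfl⟩
      rw [hCs_mem] at hedge
      obtain ⟨p, hp, hpe⟩ := hedge
      have hp' := (hCf_mem p).mp hp
      rcases Sym2.eq_iff.mp hpe with ⟨h1, h2⟩ | ⟨h1, h2⟩
      · exact hp'.2.2 (by rw [h2]; exact hbW)
      · exact hp'.2.2 (by rw [h2]; exact hvW0)
    have hclosed' : ∀ a ∈ (↑(insert v W) : Set V), ∀ b, G.Adj a b →
        b ∈ (↑(insert v W) : Set V) := by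
      intro a ha b hab
      rw [Finset.coe_insert, Set.mem_insert_iff] at ha ⊢
      rcases ha with rfl | haW
      · right
        have hedge : s(a, b) ∈ Cs := by
          rw [hv, SimpleGraph.mk'_mem_incidenceSet_iff]
          exact ⟨hab, Or.inl rfl⟩
        rw [hCs_mem] at hedge
        obtain ⟨p, hp, hpe⟩ := hedge
        have hp' := (hCf_mem p).mp hp
        rcases Sym2.eq_iff.mp hpe with ⟨h1, h2⟩ | ⟨h1, h2⟩
        · exact absurd (by rw [← h1]; exact hp'.1) hvW
        · rw [← h1]
          exact hp'.1
      · by_cases hbW : b ∈ W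
        · right; exact hbW
        · left
          have hedge : s(a, b) ∈ Cs :=
            (hCs_mem _).mpr ⟨(a, b), (hCf_mem _).mpr ⟨haW, hab, hbW⟩, rfl⟩
          rw [hv, SimpleGraph.mk'_mem_incidenceSet_iff] at hedge
          rcases hedge.2 with rfl | rfl
          · exact absurd haW hvW
          · rfl
    obtain ⟨u', hu'⟩ : (((G.neighborFinset y).erase x).erase v).Nonempty := by
      rw [← Finset.card_pos]
      have h1 := Finset.pred_card_le_card_erase
        (s := (G.neighborFinset y).erase x) (a := v)
      omega
    have hu'1 := Finset.mem_of_mem_erase hu'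
    have hu'W : u' ∉ W := hNyW u' hu'1
    have hu'v : u' ≠ v := Finset.ne_of_mem_erase hu'
    refine not_connected_of_closed (a := x) (b := u') hclosed' ?_ ?_ (connected_of_three hess.1)
    · rw [Finset.coe_insert, Set.mem_insert_iff]
      exact Or.inr hxW
    · rw [Finset.coe_insert, Set.mem_insert_iff]
      rintro (rfl | h)
      · exact hu'v rfl
      · exact hu'W h

theorem matching_avoiding_closed_neighborhoods
    {V : Type*} [Fintype V] (G : SimpleGraph V) [DecidableRel G.Adj]
    (hcubic : ∀ v : V, G.degree v = 3)
    (X Y : Set V) (hbip : IsBipartition G X Y)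
    (hess : EssentiallyFourEdgeConnected G)
    (x y : V) (hx : x ∈ X) (hy : y ∈ Y) :
    ∃ M : G.Subgraph,
      M.verts = (insert x (G.neighborSet x) ∪ insert y (G.neighborSet y))ᶜ ∧
        M.IsMatching := by
  classical
  set Df : Finset V := insert x (G.neighborFinset x) ∪ insert y (G.neighborFinset y) with hDfdef
  have hDfiff : ∀ a : V,
      a ∈ Df ↔ a ∈ (insert x (G.neighborSet x) ∪ insert y (G.neighborSet y)) := by
    intro a
    simp only [hDfdef, Finset.mem_union, Finset.mem_insert, SimpleGraph.mem_neighborFinset,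
      Set.mem_union, Set.mem_insert_iff, SimpleGraph.mem_neighborSet]
  have hbip' : IsBipartition G Y X :=
    ⟨by rw [Set.union_comm]; exact hbip.1, hbip.2.1.symm, fun u v h => (hbip.2.2 h).symm⟩
  obtain ⟨hXY, hdisj, hadjcl⟩ := hbip
  have hdXY : ∀ {u : V}, u ∈ X → u ∈ Y → False := fun hu hv => Set.disjoint_left.mp hdisj hu hv
  have hmemY : ∀ {u v : V}, u ∈ X → G.Adj u v → v ∈ Y := by
    intro u v hu h
    rcases hadjcl h with ⟨_, h2⟩ | ⟨h1, _⟩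
    · exact h2
    · exact absurd h1 (fun hh => hdXY hu hh)
  have hmemX : ∀ {u v : V}, u ∈ Y → G.Adj u v → v ∈ X := by
    intro u v hu h
    rcases hadjcl h with ⟨h1, _⟩ | ⟨_, h2⟩
    · exact absurd h1 (fun hh => hdXY hh hu)
    · exact h2
  set tf : V → Finset V := fun a => G.neighborFinset a \ Df with htf
  have hallX : ∀ S : Finset V, (∀ a ∈ S, a ∈ X ∧ a ∉ Df) → S.card ≤ (S.biUnion tf).card := by
    intro S hS
    exact key_hall G hcubic X Y ⟨hXY, hdisj, hadjcl⟩ hess x y hx hy S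
      (fun a ha => (hS a ha).1) (fun a ha => (hS a ha).2)
  have hallY : ∀ S : Finset V, (∀ a ∈ S, a ∈ Y ∧ a ∉ Df) → S.card ≤ (S.biUnion tf).card := by
    intro S hS
    have hDf' : insert y (G.neighborFinset y) ∪ insert x (G.neighborFinset x) = Df :=
      Finset.union_comm _ _
    have := key_hall G hcubic Y X hbip' hess y x hy hx S
      (fun a ha => (hS a ha).1) (fun a ha => by rw [hDf']; exact (hS a ha).2)
    simpa [htf, hDf'] using this
  set Xf : Finset V := Finset.univ.filter (fun a => a ∈ X ∧ a ∉ Df) with hXfdef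
  set Yf : Finset V := Finset.univ.filter (fun a => a ∈ Y ∧ a ∉ Df) with hYfdef
  have hXf_iff : ∀ a : V, a ∈ Xf ↔ a ∈ X ∧ a ∉ Df := by
    intro a; simp [hXfdef]
  have hYf_iff : ∀ a : V, a ∈ Yf ↔ a ∈ Y ∧ a ∉ Df := by
    intro a; simp [hYfdef]
  have hsubY : ∀ S : Finset V, (∀ a ∈ S, a ∈ X ∧ a ∉ Df) → S.biUnion tf ⊆ Yf := by
    intro S hS b hb
    rw [Finset.mem_biUnion] at hb
    obtain ⟨a, ha, hmem⟩ := hb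
    rw [htf, Finset.mem_sdiff, SimpleGraph.mem_neighborFinset] at hmem
    exact (hYf_iff b).mpr ⟨hmemY (hS a ha).1 hmem.1, hmem.2⟩
  have hsubX : ∀ S : Finset V, (∀ a ∈ S, a ∈ Y ∧ a ∉ Df) → S.biUnion tf ⊆ Xf := by
    intro S hS b hb
    rw [Finset.mem_biUnion] at hb
    obtain ⟨a, ha, hmem⟩ := hb
    rw [htf, Finset.mem_sdiff, SimpleGraph.mem_neighborFinset] at hmem
    exact (hXf_iff b).mpr ⟨hmemX (hS a ha).1 hmem.1, hmem.2⟩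
  have hXfmem : ∀ a ∈ Xf, a ∈ X ∧ a ∉ Df := fun a ha => (hXf_iff a).mp ha
  have hYfmem : ∀ a ∈ Yf, a ∈ Y ∧ a ∉ Df := fun a ha => (hYf_iff a).mp ha
  have hcard1 : Xf.card ≤ Yf.card :=
    le_trans (hallX Xf hXfmem) (Finset.card_le_card (hsubY Xf hXfmem))
  have hcard2 : Yf.card ≤ Xf.card :=
    le_trans (hallY Yf hYfmem) (Finset.card_le_card (hsubX Yf hYfmem))
  have hcardeq : Xf.card = Yf.card := le_antisymm hcard1 hcard2
  -- Hall's theorem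
  have hHall : ∀ s : Finset {a : V // a ∈ Xf},
      s.card ≤ (s.biUnion (fun a => tf ↑a)).card := by
    intro s
    have himg : (s.image (fun a : {a : V // a ∈ Xf} => (a : V))).card = s.card :=
      Finset.card_image_of_injective _ Subtype.val_injective
    have hb : s.biUnion (fun a => tf ↑a)
        = (s.image (fun a : {a : V // a ∈ Xf} => (a : V))).biUnion tf := by
      ext b
      simp [Finset.mem_biUnion]
    rw [← himg, hb]
    apply hallX
    intro a ha
    rw [Finset.mem_image] at ha
    obtain ⟨a', _, rfl⟩ := ha
    exact hXfmem _ a'.2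
  obtain ⟨f, hfinj, hfmem⟩ :=
    (Finset.all_card_le_biUnion_card_iff_exists_injective (fun a : {a : V // a ∈ Xf} => tf ↑a)).mp
      hHall
  have ffacts : ∀ a : {a : V // a ∈ Xf}, G.Adj ↑a (f a) ∧ f a ∉ Df := by
    intro a
    have := hfmem a
    rw [htf, Finset.mem_sdiff, SimpleGraph.mem_neighborFinset] at this
    exact this
  have fYf : ∀ a : {a : V // a ∈ Xf}, f a ∈ Yf := by
    intro a
    exact (hYf_iff _).mpr ⟨hmemY (hXfmem _ a.2).1 (ffacts a).1, (ffacts a).2⟩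
  have hsurj : ∀ b ∈ Yf, ∃ a : {a : V // a ∈ Xf}, f a = b := by
    intro b hb
    have himg_eq : Finset.univ.image f = Yf := by
      apply Finset.eq_of_subset_of_card_le
      · intro c hc
        rw [Finset.mem_image] at hc
        obtain ⟨a, _, rfl⟩ := hc
        exact fYf a
      · rw [Finset.card_image_of_injective _ hfinj, Finset.card_univ, Fintype.card_coe,
          hcardeq]
    rw [← himg_eq, Finset.mem_image] at hb
    obtain ⟨a, _, ha⟩ := hb
    exact ⟨a, ha⟩
  refine ⟨⟨(insert x (G.neighborSet x) ∪ insert y (G.neighborSet y))ᶜ,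
    fun u w => (∃ h : u ∈ Xf, w = f ⟨u, h⟩) ∨ (∃ h : w ∈ Xf, u = f ⟨w, h⟩),
    ?_, ?_, ?_⟩, rfl, ?_⟩
  · rintro v w (⟨h, rfl⟩ | ⟨h, rfl⟩)
    · exact (ffacts ⟨v, h⟩).1
    · exact ((ffacts ⟨w, h⟩).1).symm
  · rintro v w (⟨h, _⟩ | ⟨h, rfl⟩)
    · intro hmem
      exact ((hXfmem v h).2) ((hDfiff v).mpr hmem)
    · intro hmem
      exact (ffacts ⟨w, h⟩).2 ((hDfiff _).mpr hmem)
  · constructor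
    rintro v w (⟨h, hh⟩ | ⟨h, hh⟩)
    · exact Or.inr ⟨h, hh⟩
    · exact Or.inl ⟨h, hh⟩
  · intro v hv
    have hvndf : v ∉ Df := fun h => hv ((hDfiff v).mp h)
    have hvXY : v ∈ X ∪ Y := by rw [hXY]; trivial
    rcases hvXY with hvX | hvY
    · have hvXf : v ∈ Xf := (hXf_iff v).mpr ⟨hvX, hvndf⟩
      refine ⟨f ⟨v, hvXf⟩, Or.inl ⟨hvXf, rfl⟩, ?_⟩
      rintro w (⟨h, rfl⟩ | ⟨h, hveq⟩)
      · rfl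
      · exfalso
        have : v ∈ Y := by
          rw [hveq]
          exact (hYfmem _ (fYf ⟨w, h⟩)).1
        exact hdXY hvX this
    · have hvYf : v ∈ Yf := (hYf_iff v).mpr ⟨hvY, hvndf⟩
      obtain ⟨a, ha⟩ := hsurj v hvYf
      refine ⟨↑a, Or.inr ⟨a.2, by rw [Subtype.coe_eta]; exact ha.symm⟩, ?_⟩
      rintro w (⟨h, hw⟩ | ⟨h, hveq⟩)
      · exact absurd (hXfmem v h).1 (fun hh => hdXY hh hvY)
      · have heq : (⟨w, h⟩ : {a : V // a ∈ Xf}) = a := hfinj (by rw [← hveq, ha])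
        exact congrArg Subtype.val heq
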